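/- For any real n > 1, there exists a univariate polynomial p of degree at most √(2(n−1)) such that 1/(2t) ≤ p(t) ≤ 1/t for all t ∈ [1, n]. -/

import Mathlib

open Polynomial Polynomial.Chebyshev

lemma my_natDegree_T_le (k : ℕ) : (T ℝ (k : ℤ)).natDegree ≤ k := by
  induction k using Nat.twoStepInduction with
  | zero => simp [T_zero]
  | one => simp [T_one]
  | more k ih1 ih2 =>
    have h : ((k + 2 : ℕ) : ℤ) = (k : ℤ) + 2 := by push_cast; ring
    rw [h, T_add_two]
    refine le_trans (natDegree_sub_le _ _) (max_le ?_ (by omega))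
    refine le_trans natDegree_mul_le ?_
    have h2 : (2 * X : ℝ[X]).natDegree ≤ 1 := by
      refine le_trans natDegree_mul_le ?_
      simp
    have h3 : ((k : ℤ) + 1) = ((k + 1 : ℕ) : ℤ) := by push_cast; ring
    rw [h3]
    omega

lemma my_T_eval_add_inv (r : ℝ) (hr : 0 < r) (k : ℕ) :
    (T ℝ (k : ℤ)).eval ((r + r⁻¹) / 2) = (r ^ k + r⁻¹ ^ k) / 2 := by
  induction k using Nat.twoStepInduction with
  | zero => simp [T_zero]
  | one => simp [T_one]
  | more k ih1 ih2 =>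
    have h : ((k + 2 : ℕ) : ℤ) = (k : ℤ) + 2 := by push_cast; ring
    have h3 : ((k : ℤ) + 1) = ((k + 1 : ℕ) : ℤ) := by push_cast; ring
    rw [h, T_add_two, h3]
    have hr0 : r ≠ 0 := ne_of_gt hr
    simp only [eval_sub, eval_mul, eval_X, eval_ofNat, ih1, ih2]
    field_simp
    linear_combination (r * r⁻¹ ^ k - r⁻¹ * r⁻¹ ^ k) * mul_inv_cancel₀ hr0

lemma my_abs_T_le (k : ℕ) {x : ℝ} (h1 : -1 ≤ x) (h2 : x ≤ 1) :
    |(T ℝ (k : ℤ)).eval x| ≤ 1 := by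
  rw [← Real.cos_arccos h1 h2, T_real_cos]
  exact Real.abs_cos_le_one _

lemma my_bern2 (u : ℝ) (hu : 0 ≤ u) (m : ℕ) :
    1 + m * u + (m * (m - 1)) / 2 * u ^ 2 ≤ (1 + u) ^ m := by
  induction m with
  | zero => simp
  | succ k ih =>
    have h1 : (0 : ℝ) ≤ 1 + u := by linarith
    have hk : (0 : ℝ) ≤ (k : ℝ) * ((k : ℝ) - 1) := by
      rcases Nat.eq_zero_or_pos k with h | h
      · simp [h]
      · have : (1 : ℝ) ≤ (k : ℝ) := by exact_mod_cast h
        nlinarith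
    have key := mul_le_mul_of_nonneg_left ih h1
    have hp : (1 + u) ^ (k + 1) = (1 + u) ^ k * (1 + u) := pow_succ _ _
    push_cast
    rw [hp]
    nlinarith [mul_nonneg (mul_nonneg hk hu) (mul_nonneg hu hu), key,
      mul_nonneg (Nat.cast_nonneg (α := ℝ) k) (mul_nonneg hu hu)]
open Polynomial Polynomial.Chebyshev

lemma my_bound1 (Mv Q t : ℝ) (hM : 3 ≤ Mv) (hQ : Q ≤ 1) (ht : 0 < t) :
    1 * ((Mv + 1) * t) ≤ (Mv - Q) * (2 * t) := by nlinarith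

lemma my_bound2 (Mv Q t : ℝ) (hM : 3 ≤ Mv) (hQ : -1 ≤ Q) (ht : 0 < t) :
    (Mv - Q) * t ≤ 1 * ((Mv + 1) * t) := by nlinarith

lemma my_key (u v : ℝ) (hu0 : 0 < u) (hu2 : u ≤ 2) (hv0 : 0 < v)
    (hv2 : v ^ 2 = 8 + 8 * u) : 6 ≤ 1 + v + (v ^ 2 - v * u) / 2 := by
  have hvge : 2 ≤ v := by nlinarith
  have hvle : v ≤ 5 := by nlinarith
  nlinarith [mul_nonneg (by nlinarith : (0:ℝ) ≤ v ^ 2 - 8) (by linarith : (0:ℝ) ≤ 8 - v)]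


/-- For any real `n > 1`, there is a polynomial `p` of degree at most `√(2(n−1))` with
`1/(2t) ≤ p(t) ≤ 1/t` for all `t ∈ [1,n]`. -/
theorem exists_half_reciprocal_approx (n : ℝ) (hn : 1 < n) :
    ∃ p : Polynomial ℝ, (p.natDegree : ℝ) ≤ Real.sqrt (2 * (n - 1)) ∧
      ∀ t ∈ Set.Icc (1 : ℝ) n, 1 / (2 * t) ≤ p.eval t ∧ p.eval t ≤ 1 / t := by
  rcases le_or_gt n 2 with h2 | h2
  · -- small case: constant 1/2
    refine ⟨Polynomial.C (1/2), by simp [Real.sqrt_nonneg], fun t ht => ?_⟩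
    obtain ⟨ht1, htn⟩ := ht
    have ht0 : 0 < t := by linarith
    constructor
    · rw [eval_C, div_le_div_iff₀ (by positivity) (by norm_num)]
      linarith
    · rw [eval_C, div_le_div_iff₀ (by norm_num) ht0]
      linarith
  · -- Chebyshev case
    have hn1 : (0:ℝ) < n - 1 := by linarith
    obtain ⟨s, hs_def⟩ : ∃ s : ℝ, s = Real.sqrt n := ⟨_, rfl⟩
    have hs2 : s ^ 2 = n := by rw [hs_def]; exact Real.sq_sqrt (by linarith)
    have hs0 : 0 < s := by rw [hs_def]; exact Real.sqrt_pos.mpr (by linarith)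
    have hs1 : 1 < s := by nlinarith
    obtain ⟨a, ha_def⟩ : ∃ a : ℝ, a = Real.sqrt (2 * (n - 1)) := ⟨_, rfl⟩
    have ha2 : a ^ 2 = 2 * (n - 1) := by rw [ha_def]; exact Real.sq_sqrt (by linarith)
    have ha0 : 0 ≤ a := by rw [ha_def]; exact Real.sqrt_nonneg _
    have ha1 : 1 ≤ a := by nlinarith
    obtain ⟨m, hm_def⟩ : ∃ m : ℕ, m = ⌊a⌋₊ + 1 := ⟨_, rfl⟩
    have ham : a < m := by
      have h := Nat.lt_floor_add_one a
      rw [hm_def]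
      push_cast
      push_cast at h
      linarith
    have hfle : (⌊a⌋₊ : ℝ) ≤ a := Nat.floor_le ha0
    obtain ⟨u, hu_def⟩ : ∃ u : ℝ, u = 2 / (s - 1) := ⟨_, rfl⟩
    have hu0 : 0 < u := by rw [hu_def]; exact div_pos (by norm_num) (by linarith)
    obtain ⟨r, hr_def⟩ : ∃ r : ℝ, r = 1 + u := ⟨_, rfl⟩
    have hr1 : 1 < r := by linarith
    have hr0 : 0 < r := by linarith
    -- key bound : r ^ m ≥ 6
    have hr6 : 6 ≤ r ^ m := by
      rcases le_or_gt n 4 with h4 | h4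
      · have hsle : s ≤ 2 := by nlinarith
        have hu2 : 2 ≤ u := by
          rw [hu_def, le_div_iff₀ (by linarith)]
          linarith
        have hm2 : 2 ≤ m := by
          have : 1 ≤ ⌊a⌋₊ := Nat.le_floor (by exact_mod_cast ha1)
          omega
        have h1 : r ^ 2 ≤ r ^ m := pow_le_pow_right₀ (by linarith) hm2
        nlinarith
      · have hsge : 2 ≤ s := by nlinarith
        have hu2 : u ≤ 2 := by
          rw [hu_def, div_le_iff₀ (by linarith)]
          linarith
        have hber := my_bern2 u hu0.le m
        have hma : a ≤ (m : ℝ) := ham.le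
        have hmono : 1 + a * u + (a * (a - 1)) / 2 * u ^ 2 ≤ (1 + u) ^ m := by
          have e1 : a * u ≤ (m : ℝ) * u := mul_le_mul_of_nonneg_right hma hu0.le
          have e2 : a * (a - 1) ≤ (m : ℝ) * ((m : ℝ) - 1) :=
            mul_le_mul hma (by linarith) (by linarith) (Nat.cast_nonneg m)
          have e3 := mul_le_mul_of_nonneg_right e2 (sq_nonneg u)
          linarith [hber, e1, e3]
        have hv2 : (a * u) ^ 2 = 8 + 8 * u := by
          have hs1' : s - 1 ≠ 0 := by linarith
          rw [mul_pow, ha2, hu_def, ← hs2]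
          field_simp
          ring
        have hv0 : 0 < a * u := mul_pos (by linarith) hu0
        have hkey := my_key u (a * u) hu0 hu2 hv0 hv2
        have hid : (a * (a - 1)) / 2 * u ^ 2 = ((a * u) ^ 2 - (a * u) * u) / 2 := by ring
        rw [hid] at hmono
        rw [hr_def]
        linarith [hmono, hkey]
    obtain ⟨M, hM_def⟩ : ∃ M : ℝ, M = (r ^ m + r⁻¹ ^ m) / 2 := ⟨_, rfl⟩
    have hrm0 : 0 < r⁻¹ ^ m := by positivity
    have hM3 : 3 ≤ M := by
      rw [hM_def]; linarith [hr6, hrm0]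
    have hM1 : 0 < M + 1 := by linarith
    obtain ⟨c, hc_def⟩ : ∃ c : ℝ, c = 2 / (n - 1) := ⟨_, rfl⟩
    obtain ⟨x0, hx0_def⟩ : ∃ x0 : ℝ, x0 = (n + 1) / (n - 1) := ⟨_, rfl⟩
    have hx0 : x0 = (r + r⁻¹) / 2 := by
      have hs1' : s - 1 ≠ 0 := by linarith
      have hs1'' : s + 1 ≠ 0 := by linarith
      have h1 : r = (s + 1) / (s - 1) := by
        rw [hr_def, hu_def]
        field_simp
        ring
      have h3 : s ^ 2 - 1 ≠ 0 := ne_of_gt (by nlinarith)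
      rw [hx0_def, h1, inv_div, ← hs2]
      field_simp
      ring
    obtain ⟨g, hg_def⟩ : ∃ g : ℝ[X], g = Polynomial.C x0 - Polynomial.C c * Polynomial.X := ⟨_, rfl⟩
    obtain ⟨q, hq_def⟩ : ∃ q : ℝ[X], q = (T ℝ (m : ℤ)).comp g := ⟨_, rfl⟩
    have hqe : ∀ t : ℝ, q.eval t = (T ℝ (m : ℤ)).eval (x0 - c * t) := by
      intro t
      simp [hq_def, hg_def, eval_comp]
    have hq0 : q.eval 0 = M := by
      rw [hqe, mul_zero, sub_zero, hx0, my_T_eval_add_inv r hr0 m, hM_def]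
    have habs : ∀ t ∈ Set.Icc (1:ℝ) n, |q.eval t| ≤ 1 := by
      intro t ht
      obtain ⟨ht1, htn⟩ := ht
      rw [hqe]
      have harg : x0 - c * t = (n + 1 - 2 * t) / (n - 1) := by
        rw [hx0_def, hc_def]; ring
      have hw1 : -1 ≤ x0 - c * t := by
        rw [harg, le_div_iff₀ hn1]
        linarith
      have hw2 : x0 - c * t ≤ 1 := by
        rw [harg, div_le_one hn1]
        linarith
      exact my_abs_T_le m hw1 hw2
    obtain ⟨pol, hpol_def⟩ : ∃ pol : ℝ[X], pol = Polynomial.C M - q := ⟨_, rfl⟩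
    have hdvd : Polynomial.X ∣ pol := by
      rw [Polynomial.X_dvd_iff, Polynomial.coeff_zero_eq_eval_zero]
      simp [hpol_def, hq0]
    obtain ⟨p1, hp1⟩ := hdvd
    have hp1ne : p1 ≠ 0 := by
      intro h
      have h1 : pol.eval 1 = 0 := by rw [hp1, h]; simp
      have h2 : pol.eval 1 = M - q.eval 1 := by simp [hpol_def]
      have h3 := habs 1 ⟨le_refl 1, by linarith⟩
      rw [h2] at h1
      have := abs_le.mp h3
      linarith [this.2]
    refine ⟨Polynomial.C (M + 1)⁻¹ * p1, ?_, ?_⟩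
    · -- degree bound
      have hdq : q.natDegree ≤ m := by
        rw [hq_def]
        refine le_trans (natDegree_comp_le) ?_
        have h1 : g.natDegree ≤ 1 := by
          rw [hg_def]
          refine le_trans (natDegree_sub_le _ _) (max_le (by simp) ?_)
          refine le_trans (natDegree_C_mul_le _ _) (by simp)
        calc (T ℝ (m:ℤ)).natDegree * g.natDegree ≤ m * 1 :=
              Nat.mul_le_mul (my_natDegree_T_le m) h1
          _ = m := by ring
      have hdpol : pol.natDegree ≤ m := by
        rw [hpol_def]
        refine le_trans (natDegree_sub_le _ _) (max_le (by simp) hdq)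
      have hdp1 : p1.natDegree ≤ ⌊a⌋₊ := by
        have h1 : pol.natDegree = 1 + p1.natDegree := by
          rw [hp1, natDegree_mul X_ne_zero hp1ne, natDegree_X]
        omega
      have hfinal : (Polynomial.C (M + 1)⁻¹ * p1).natDegree ≤ ⌊a⌋₊ :=
        le_trans (natDegree_C_mul_le _ _) hdp1
      calc ((Polynomial.C (M + 1)⁻¹ * p1).natDegree : ℝ) ≤ (⌊a⌋₊ : ℝ) := by
            exact_mod_cast hfinal
        _ ≤ a := hfle
        _ = Real.sqrt (2 * (n - 1)) := ha_def
    · -- value bounds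
      intro t ht
      obtain ⟨ht1, htn⟩ := ht
      have ht0 : 0 < t := by linarith
      have hqt := abs_le.mp (habs t ⟨ht1, htn⟩)
      have hev : t * p1.eval t = M - q.eval t := by
        have := congrArg (Polynomial.eval t) hp1
        simpa [hpol_def] using this.symm
      have hpe : (Polynomial.C (M + 1)⁻¹ * p1).eval t = (M - q.eval t) / ((M + 1) * t) := by
        rw [eval_mul, eval_C, ← hev]
        field_simp
      rw [hpe]
      constructor
      · rw [div_le_div_iff₀ (by positivity) (by positivity)]
        exact my_bound1 M (q.eval t) t hM3 hqt.2 ht0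
      · rw [div_le_div_iff₀ (by positivity) ht0]
        exact my_bound2 M (q.eval t) t hM3 hqt.1 ht0
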